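/- Let Q ≥ 2 be an integer, γ ≥ 0 a real number, and J = Q+1. For any real period effects φ_1,…,φ_J and any real calendar time-varying treatment effects ξ_2,…,ξ_{J−1} (with the convention ξ_1 = ξ_J = 0), the IT-estimator weights applied to the marginal cell means of a model with calendar time-varying treatment effects satisfy Σ_{j=1}^{J} Σ_{q=1}^{Q} c(q,j)·(1{j>q}·ξ_j + φ_j) = Σ_{j=2}^{J−1} [6(j−1)(Q+1−j)/(Q(Q+1)(Q−1))]·ξ_j. In particular, the misspecified immediate treatment effect estimator is in expectation a weighted sum of the calendar time-varying treatment effect estimands with weights w₂(Q,j) = 6(j−1)(Q+1−j)/(Q(Q+1)(Q−1)) that do not depend on γ. -/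

import Mathlib

/-- The weight the immediate-treatment (IT) GLS estimator with exchangeable working
correlation applies to the cell mean of sequence `q` in period `j`, in a standard
stepped-wedge design with `Q` sequences and `J = Q+1` periods. -/
noncomputable def ITweight (Q : ℕ) (γ : ℝ) (q j : ℕ) : ℝ :=
  (12 * (1 + γ * Q) / ((Q : ℝ) * ((Q : ℝ) + 1) * (γ * (Q : ℝ) ^ 2 + 2 * Q - γ * Q - 2))) *
    ((Q : ℝ) * (if q < j then (1 : ℝ) else 0) + 1 - (j : ℝ) +
      γ * (Q : ℝ) * (2 * (q : ℝ) - (Q : ℝ) - 1) / (2 * (1 + γ * (Q : ℝ))))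

lemma sum_affine (a b : ℝ) : ∀ n : ℕ,
    ∑ q ∈ Finset.Ioc 0 n, (a + b * (q : ℝ)) = n * a + b * (n * (n + 1) / 2) := by
  intro n
  induction n with
  | zero => simp
  | succ n ih =>
      rw [Finset.sum_Ioc_succ_top (Nat.zero_le _), ih]
      push_cast
      ring

/-- With a true underlying calendar time-varying treatment effect structure, the
misspecified IT estimator is in expectation the weighted sum of the calendar
time-varying treatment effect estimands with γ-free weights
`w₂(Q,j) = 6(j−1)(Q+1−j)/(Q(Q+1)(Q−1))`. -/
theorem IT_estimator_calendar_time_weights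
    (Q : ℕ) (hQ : 2 ≤ Q) (γ : ℝ) (hγ : 0 ≤ γ)
    (φ ξ : ℕ → ℝ) (hξ1 : ξ 1 = 0) (hξJ : ξ (Q + 1) = 0) :
    ∑ j ∈ Finset.Icc 1 (Q + 1), ∑ q ∈ Finset.Icc 1 Q,
        ITweight Q γ q j * ((if q < j then ξ j else 0) + φ j)
      = ∑ j ∈ Finset.Icc 2 Q,
          (6 * ((j : ℝ) - 1) * ((Q : ℝ) + 1 - (j : ℝ)) /
            ((Q : ℝ) * ((Q : ℝ) + 1) * ((Q : ℝ) - 1))) * ξ j := by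
  have hQR : (2 : ℝ) ≤ (Q : ℝ) := by exact_mod_cast hQ
  have hA : (0 : ℝ) < 1 + γ * Q := by positivity
  have hD : (0 : ℝ) < γ * (Q : ℝ) ^ 2 + 2 * Q - γ * Q - 2 := by nlinarith
  have hQ0 : (Q : ℝ) ≠ 0 := by linarith
  have hQ1 : (Q : ℝ) + 1 ≠ 0 := by linarith
  have hQm1 : (Q : ℝ) - 1 ≠ 0 := by linarith
  -- inner sum formula
  have key : ∀ j ∈ Finset.Icc 1 (Q + 1),
      ∑ q ∈ Finset.Icc 1 Q, ITweight Q γ q j * ((if q < j then ξ j else 0) + φ j)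
        = (6 * ((j : ℝ) - 1) * ((Q : ℝ) + 1 - (j : ℝ)) /
            ((Q : ℝ) * ((Q : ℝ) + 1) * ((Q : ℝ) - 1))) * ξ j := by
    intro j hj
    rw [Finset.mem_Icc] at hj
    set M : ℝ := 12 * (1 + γ * Q) / ((Q : ℝ) * ((Q : ℝ) + 1) *
      (γ * (Q : ℝ) ^ 2 + 2 * Q - γ * Q - 2)) with hM
    set A : ℝ := 1 + γ * (Q : ℝ) with hAdef
    -- coefficients for treated (q < j) and untreated cells as affine functions of q
    set a1 : ℝ := M * ((Q : ℝ) + 1 - (j : ℝ) + γ * Q * (-(Q : ℝ) - 1) / (2 * A)) * (ξ j + φ j)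
      with ha1
    set b1 : ℝ := M * (γ * Q * 2 / (2 * A)) * (ξ j + φ j) with hb1
    set a2 : ℝ := M * (1 - (j : ℝ) + γ * Q * (-(Q : ℝ) - 1) / (2 * A)) * φ j with ha2
    set b2 : ℝ := M * (γ * Q * 2 / (2 * A)) * φ j with hb2
    have hsplit :
        ∑ q ∈ Finset.Ioc 0 (j - 1), (ITweight Q γ q j * ((if q < j then ξ j else 0) + φ j))
          + ∑ q ∈ Finset.Ioc (j - 1) Q, (ITweight Q γ q j * ((if q < j then ξ j else 0) + φ j))
          = ∑ q ∈ Finset.Ioc 0 Q, (ITweight Q γ q j * ((if q < j then ξ j else 0) + φ j)) :=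
      Finset.sum_Ioc_consecutive _ (by omega) (by omega)
    have hIcc : Finset.Icc 1 Q = Finset.Ioc 0 Q := by
      ext x; simp [Finset.mem_Icc, Finset.mem_Ioc]; omega
    have h1 : ∑ q ∈ Finset.Ioc 0 (j - 1),
        (ITweight Q γ q j * ((if q < j then ξ j else 0) + φ j))
        = ∑ q ∈ Finset.Ioc 0 (j - 1), (a1 + b1 * (q : ℝ)) := by
      apply Finset.sum_congr rfl
      intro q hq
      rw [Finset.mem_Ioc] at hq
      have hlt : q < j := by omega
      rw [if_pos hlt, ITweight, if_pos hlt, ha1, hb1]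
      ring
    have h2 : ∀ n : ℕ, n + 1 ≥ j → ∑ q ∈ Finset.Ioc (j - 1) n,
        (ITweight Q γ q j * ((if q < j then ξ j else 0) + φ j))
        = ∑ q ∈ Finset.Ioc (j - 1) n, (a2 + b2 * (q : ℝ)) := by
      intro n _
      apply Finset.sum_congr rfl
      intro q hq
      rw [Finset.mem_Ioc] at hq
      have hge : ¬ q < j := by omega
      rw [if_neg hge, ITweight, if_neg hge, ha2, hb2]
      ring
    have hsplit2 :
        ∑ q ∈ Finset.Ioc 0 (j - 1), (a2 + b2 * (q : ℝ))
          + ∑ q ∈ Finset.Ioc (j - 1) Q, (a2 + b2 * (q : ℝ))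
          = ∑ q ∈ Finset.Ioc 0 Q, (a2 + b2 * (q : ℝ)) :=
      Finset.sum_Ioc_consecutive _ (by omega) (by omega)
    have hm : ((j - 1 : ℕ) : ℝ) = (j : ℝ) - 1 := by
      have : (1 : ℕ) ≤ j := hj.1
      push_cast [this]
      ring
    rw [hIcc, ← hsplit, h1, h2 Q (by omega), eq_sub_of_add_eq' hsplit2,
      sum_affine, sum_affine, sum_affine, hm, ha1, hb1, ha2, hb2, hM, hAdef]
    have hA' : 2 * (1 + γ * (Q : ℝ)) ≠ 0 := by positivity
    have hD' : (Q : ℝ) * ((Q : ℝ) + 1) * (γ * (Q : ℝ) ^ 2 + 2 * Q - γ * Q - 2) ≠ 0 := by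
      apply mul_ne_zero (mul_ne_zero hQ0 hQ1); linarith
    have hD2 : γ * (Q : ℝ) ^ 2 + 2 * Q - γ * Q - 2 ≠ 0 := hD.ne'
    field_simp
    ring_nf
    field_simp [show (-2 - γ * (Q : ℝ) + γ * (Q : ℝ) ^ 2 + (Q : ℝ) * 2) ≠ 0 by linarith]
    ring
  rw [Finset.sum_congr rfl key]
  have hset : Finset.Icc 1 (Q + 1) = insert 1 (insert (Q + 1) (Finset.Icc 2 Q)) := by
    ext x
    simp only [Finset.mem_Icc, Finset.mem_insert]
    omega
  rw [hset, Finset.sum_insert, Finset.sum_insert]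
  · simp [hξ1, hξJ]
  · simp [Finset.mem_Icc]
  · simp [Finset.mem_Icc]
    omega
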